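/- Exponential reduction: Let γ(z) = ∑_{k=0}^n γ_k z^k be a polynomial state of dimension d = 2^b with degree n ≥ d−1, let Γ_j denote the d×d matrix whose columns are γ_j, γ_{j+1}, …, γ_{j+d−1} (with γ_k = 0 for k > n). There exists a unitary A ∈ U(d) such that (A W_b)† γ(z), where W_b = diag(1, z, z², …, z^{d−1}), is a polynomial state of degree at most n − (d−1), if and only if Γ_0† Γ_{n−(d−1)} is lower triangular. -/

import Mathlib

set_option linter.unusedSectionVars false
set_option maxHeartbeats 1000000
open Matrix Polynomial Finset Submodule Module

/-- The value at `z` of the vector-valued polynomial with coefficient vectors `γ k`,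
of degree at most `n`. -/
noncomputable def polyVal {d : ℕ} (n : ℕ) (γ : ℕ → Fin d → ℂ) (z : ℂ) : Fin d → ℂ :=
  fun i => ∑ k ∈ Finset.range (n + 1), γ k i * z ^ k

/-- The `d × d` coefficient matrix whose columns are `γ j, γ (j+1), …, γ (j+d-1)`. -/
def coeffMatrix {d : ℕ} (γ : ℕ → Fin d → ℂ) (j : ℕ) : Matrix (Fin d) (Fin d) ℂ :=
  Matrix.of fun i c => γ (j + (c : ℕ)) i

lemma conj_mul_self_one {z : ℂ} (hz : ‖z‖ = 1) : (starRingEnd ℂ) z * z = 1 := by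
  rw [mul_comm, Complex.mul_conj, Complex.normSq_eq_norm_sq, hz]
  norm_num

section helpers
variable {V : Type*} [NormedAddCommGroup V] [InnerProductSpace ℂ V] [FiniteDimensional ℂ V]


lemma circle_infinite : ({z : ℂ | ‖z‖ = 1}).Infinite := by
  have key : ∀ t : ℝ, ‖(1 + t * Complex.I) / (‖1 + t * Complex.I‖ : ℂ)‖ = 1 := by
    intro t
    have hne : (1 + t * Complex.I) ≠ 0 := by
      intro h
      have := congrArg Complex.re h
      simp at this
    have habs : ‖1 + t * Complex.I‖ ≠ 0 := by
      simpa using hne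
    rw [norm_div, Complex.norm_real, norm_norm, div_self habs]
  apply Set.infinite_of_injective_forall_mem
    (f := fun t : ℝ => (1 + t * Complex.I) / (‖1 + t * Complex.I‖ : ℂ))
  case hi =>
    intro a b hab
    have ha : (‖1 + a * Complex.I‖ : ℝ) > 0 := by
      apply norm_pos_iff.2
      intro h; have := congrArg Complex.re h; simp at this
    have hb : (‖1 + b * Complex.I‖ : ℝ) > 0 := by
      apply norm_pos_iff.2
      intro h; have := congrArg Complex.re h; simp at this
    simp only at hab
    rw [div_eq_div_iff (by exact_mod_cast ha.ne') (by exact_mod_cast hb.ne')] at hab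
    have hre := congrArg Complex.re hab
    have him := congrArg Complex.im hab
    simp [Complex.add_re, Complex.add_im, Complex.mul_re, Complex.mul_im] at hre him
    -- hre : abs(1+bI) = abs(1+aI), him : a * abs(1+bI) = b * abs(1+aI)
    rw [hre] at him
    exact mul_right_cancel₀ (by exact_mod_cast ha.ne') him
  case hf =>
    intro t; exact key t

lemma poly_eq_of_circle {p q : Polynomial ℂ} (h : ∀ z : ℂ, ‖z‖ = 1 → p.eval z = q.eval z) :
    p = q := by
  have : p - q = 0 := by
    apply Polynomial.eq_zero_of_infinite_isRoot
    apply Set.Infinite.mono _ circle_infinite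
    intro z hz
    simp only [Set.mem_setOf_eq, IsRoot, eval_sub, sub_eq_zero]
    exact h z hz
  exact sub_eq_zero.mp this



lemma coeff_vanish (n m i : ℕ) (a b : ℕ → ℂ) (hb : ∀ k, m < k → b k = 0)
    (h : ∀ z : ℂ, ‖z‖ = 1 →
      ∑ k ∈ Finset.range (n+1), a k * z ^ k = ∑ k ∈ Finset.range (n+1), b k * z ^ (k + i)) :
    ∀ k, k ≤ n → (k < i ∨ m + i < k) → a k = 0 := by
  set p : Polynomial ℂ := ∑ k ∈ Finset.range (n+1), C (a k) * X ^ k with hp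
  set q : Polynomial ℂ := ∑ k ∈ Finset.range (n+1), C (b k) * X ^ (k + i) with hq
  have hpq : p = q := by
    apply poly_eq_of_circle
    intro z hz
    simp only [hp, hq, eval_finset_sum, eval_mul, eval_C, eval_pow, eval_X]
    exact h z hz
  have hcp : ∀ k, k ≤ n → p.coeff k = a k := by
    intro k hk
    simp only [hp, finset_sum_coeff, coeff_C_mul, coeff_X_pow, mul_ite, mul_one, mul_zero]
    rw [Finset.sum_ite_eq (Finset.range (n+1)) k a]
    simp [Nat.lt_succ_of_le hk]
  intro k hk hcase
  have hc := hcp k hk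
  rw [hpq] at hc
  have hcq : q.coeff k = 0 := by
    simp only [hq, finset_sum_coeff, coeff_C_mul, coeff_X_pow, mul_ite, mul_one, mul_zero]
    apply Finset.sum_eq_zero
    intro j hj
    rcases hcase with hlt | hgt
    · have : ¬ (k = j + i) := by omega
      simp [this]
    · by_cases hji : k = j + i
      · have : m < j := by omega
        simp [hji, hb j this]
      · simp [hji]
  rw [hcq] at hc
  exact hc.symm



lemma exists_not_mem_of_finrank_lt {p q : Submodule ℂ V} (hpq : p ≤ q)
    (h : finrank ℂ p < finrank ℂ q) : ∃ x ∈ q, x ∉ p := by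
  by_contra hcon
  push_neg at hcon
  have : q ≤ p := fun x hx => hcon x hx
  have : p = q := le_antisymm hpq this
  rw [this] at h
  omega

lemma finrank_sup_span_singleton' {p : Submodule ℂ V} {x : V} (hx : x ∉ p) :
    finrank ℂ ↥(p ⊔ span ℂ {x}) = finrank ℂ p + 1 := by
  have hx0 : x ≠ 0 := by rintro rfl; exact hx p.zero_mem
  have hinf : p ⊓ span ℂ {x} = ⊥ := by
    rw [eq_bot_iff]
    rintro y hy
    rw [Submodule.mem_inf] at hy
    obtain ⟨hy1, hy2⟩ := hy
    rw [Submodule.mem_span_singleton] at hy2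
    obtain ⟨c, rfl⟩ := hy2
    rcases eq_or_ne c 0 with rfl | hc
    · simp
    · have : x ∈ p := by
        have := p.smul_mem c⁻¹ hy1
        rwa [smul_smul, inv_mul_cancel₀ hc, one_smul] at this
      exact absurd this hx
  have := Submodule.finrank_sup_add_finrank_inf_eq p (span ℂ {x})
  rw [hinf, finrank_span_singleton hx0] at this
  simpa using this

lemma exists_between_finrank {q : Submodule ℂ V} :
    ∀ (j : ℕ) (p : Submodule ℂ V), p ≤ q → finrank ℂ p + j ≤ finrank ℂ q →
      ∃ r, p ≤ r ∧ r ≤ q ∧ finrank ℂ r = finrank ℂ p + j := by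
  intro j
  induction j with
  | zero => intro p hpq _; exact ⟨p, le_refl _, hpq, by simp⟩
  | succ j ih =>
    intro p hpq hrank
    obtain ⟨x, hxq, hxp⟩ := exists_not_mem_of_finrank_lt hpq (by omega)
    have hsub : p ⊔ span ℂ {x} ≤ q := sup_le hpq ((span_singleton_le_iff_mem x q).2 hxq)
    have hrk := finrank_sup_span_singleton' hxp
    obtain ⟨r, hr1, hr2, hr3⟩ := ih (p ⊔ span ℂ {x}) hsub (by omega)
    exact ⟨r, le_trans le_sup_left hr1, hr2, by omega⟩

lemma inner_span_zero_left {ι : Type*} {f : ι → V} {s : Set ι} {v : V}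
    (h : ∀ i ∈ s, (inner ℂ (f i) v : ℂ) = 0) :
    ∀ w ∈ span ℂ (f '' s), (inner ℂ w v : ℂ) = 0 := by
  intro w hw
  induction hw using Submodule.span_induction with
  | mem y hy => obtain ⟨i, hi, rfl⟩ := hy; exact h i hi
  | zero => simp
  | add y z _ _ hy hz => rw [inner_add_left, hy, hz]; simp
  | smul c y _ hy => rw [inner_smul_left, hy]; simp

lemma inner_span_zero_right {ι : Type*} {f : ι → V} {s : Set ι} {v : V}
    (h : ∀ i ∈ s, (inner ℂ v (f i) : ℂ) = 0) :
    ∀ w ∈ span ℂ (f '' s), (inner ℂ v w : ℂ) = 0 := by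
  intro w hw
  induction hw using Submodule.span_induction with
  | mem y hy => obtain ⟨i, hi, rfl⟩ := hy; exact h i hi
  | zero => simp
  | add y z _ _ hy hz => rw [inner_add_right, hy, hz]; simp
  | smul c y _ hy => rw [inner_smul_right, hy]; simp

lemma sum_abs_sq_mulVec {d : ℕ} {M : Matrix (Fin d) (Fin d) ℂ} (hM : Mᴴ * M = 1)
    (v : Fin d → ℂ) : ∑ i, ‖M.mulVec v i‖ ^ 2 = ∑ i, ‖v i‖ ^ 2 := by
  have key : ∀ w : Fin d → ℂ, ∑ i, ‖w i‖ ^ 2 = (star w ⬝ᵥ w).re := by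
    intro w
    rw [dotProduct, Complex.re_sum]
    congr 1; ext i
    rw [Pi.star_apply, Complex.sq_norm]
    simp [Complex.normSq_apply, Complex.mul_re]
  rw [key, key]
  congr 1
  rw [star_mulVec, dotProduct_mulVec, vecMul_vecMul, hM, vecMul_one]

end helpers

lemma exists_between_finrank' {V : Type*} [NormedAddCommGroup V] [InnerProductSpace ℂ V]
    [FiniteDimensional ℂ V] {q : Submodule ℂ V} (p : Submodule ℂ V) (k : ℕ) (hpq : p ≤ q)
    (h1 : Module.finrank ℂ p ≤ k) (h2 : k ≤ Module.finrank ℂ q) :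
    ∃ r, p ≤ r ∧ r ≤ q ∧ Module.finrank ℂ r = k := by
  obtain ⟨r, hr1, hr2, hr3⟩ := exists_between_finrank (k - Module.finrank ℂ p) p hpq (by omega)
  exact ⟨r, hr1, hr2, by omega⟩



lemma LHS_eval {d n : ℕ} (γ : ℕ → Fin d → ℂ) (A : Matrix (Fin d) (Fin d) ℂ) (z : ℂ) (i : Fin d) :
    ((A * Matrix.diagonal (fun i : Fin d => z ^ (i : ℕ)))ᴴ).mulVec (polyVal n γ z) i
      = (starRingEnd ℂ z) ^ (i : ℕ) *
        ∑ k ∈ Finset.range (n + 1), (Aᴴ.mulVec (γ k)) i * z ^ k := by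
  rw [conjTranspose_mul, ← mulVec_mulVec, diagonal_conjTranspose, mulVec_diagonal]
  congr 1
  · simp [Pi.star_apply, star_pow]
  · simp only [mulVec, dotProduct, polyVal]
    simp only [Finset.mul_sum, Finset.sum_mul]
    rw [Finset.sum_comm]
    apply Finset.sum_congr rfl
    intro k _
    apply Finset.sum_congr rfl
    intro x _
    ring




noncomputable def toEuc {d : ℕ} (v : Fin d → ℂ) : EuclideanSpace ℂ (Fin d) :=
  (WithLp.equiv 2 (Fin d → ℂ)).symm v

@[simp] lemma toEuc_apply {d : ℕ} (v : Fin d → ℂ) (i : Fin d) : toEuc v i = v i := rfl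

@[simp] lemma toEuc_zero {d : ℕ} : toEuc (0 : Fin d → ℂ) = 0 := rfl

lemma backward_construction {d n m : ℕ} (hd1 : 1 ≤ d) (hm : m + (d - 1) = n)
    (γ : ℕ → Fin d → ℂ) (hγdeg : ∀ k, n < k → γ k = 0)
    (hog : ∀ k j : ℕ, k < d → k < j →
      (inner ℂ (toEuc (γ k)) (toEuc (γ (m + j))) : ℂ) = 0) :
    ∃ B : Matrix (Fin d) (Fin d) ℂ, B * Bᴴ = 1 ∧
      ∀ (x : Fin d) (k : ℕ), (k < ↑x ∨ m + ↑x < k) → B.mulVec (γ k) x = 0 := by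
  classical
  -- the vector family in Euclidean space
  set g : ℕ → EuclideanSpace ℂ (Fin d) := fun k => toEuc (γ k) with hg
  have hgzero : ∀ k, n < k → g k = 0 := by
    intro k hk
    have : γ k = 0 := hγdeg k hk
    simp [hg, this]
  -- the V and W subspaces
  set Vc : ℕ → Submodule ℂ (EuclideanSpace ℂ (Fin d)) :=
    fun c => span ℂ (g '' Set.Iic c) with hVc
  set Wc : ℕ → Submodule ℂ (EuclideanSpace ℂ (Fin d)) :=
    fun c => span ℂ (g '' {k | m + c ≤ k}) with hWc
  have hdim : finrank ℂ (EuclideanSpace ℂ (Fin d)) = d := by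
    simp [finrank_euclideanSpace]
  -- orthogonality between the flags
  have hVW : ∀ c : ℕ, c < d → Vc c ≤ (Wc (c + 1))ᗮ := by
    intro c hcd
    simp only [hVc]
    apply span_le.2
    rintro _ ⟨k, hk, rfl⟩
    rw [SetLike.mem_coe, Submodule.mem_orthogonal]
    intro u hu
    refine inner_span_zero_left ?_ u hu
    intro l hl
    have hl' : m + (c + 1) ≤ l := hl
    have hk' : k ≤ c := hk
    rw [← inner_conj_symm]
    have : (inner ℂ (g k) (g (m + (l - m))) : ℂ) = 0 :=
      hog k (l - m) (by omega) (by omega)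
    rw [show m + (l - m) = l by omega] at this
    rw [this, map_zero]
  -- rank bounds
  have hWrank : ∀ c : ℕ, finrank ℂ (Wc c) ≤ d - c := by
    intro c
    have hle : Wc c ≤ span ℂ (↑((Finset.Icc (m + c) n).image g) : Set (EuclideanSpace ℂ (Fin d))) := by
      simp only [hWc]
      apply span_le.2
      rintro _ ⟨k, hk, rfl⟩
      by_cases hkn : k ≤ n
      · apply subset_span
        rw [Finset.coe_image]
        exact Set.mem_image_of_mem g (by simp [Finset.mem_Icc]; exact ⟨hk, hkn⟩)
      · rw [hgzero k (by omega)]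
        exact zero_mem _
    have h1 : finrank ℂ (Wc c) ≤ ((Finset.Icc (m + c) n).image g).card :=
      le_trans (Submodule.finrank_mono hle) (finrank_span_finset_le_card _)
    have h2 : ((Finset.Icc (m + c) n).image g).card ≤ (Finset.Icc (m + c) n).card :=
      Finset.card_image_le
    rw [Nat.card_Icc] at h2
    omega
  have hWorth : ∀ c : ℕ, c ≤ d → c ≤ finrank ℂ ((Wc c)ᗮ) := by
    intro c hcd
    have := Submodule.finrank_add_finrank_orthogonal (K := Wc c)
    rw [hdim] at this
    have := hWrank c
    omega
  have hVrank : ∀ c : ℕ, finrank ℂ (Vc c) ≤ c + 1 := by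
    intro c
    have hle : Vc c ≤ span ℂ (↑((Finset.Iic c).image g) : Set (EuclideanSpace ℂ (Fin d))) := by
      simp only [hVc]
      apply span_le.2
      rintro _ ⟨k, hk, rfl⟩
      apply subset_span
      rw [Finset.coe_image]
      exact Set.mem_image_of_mem g (by simpa using hk)
    have h1 : finrank ℂ (Vc c) ≤ ((Finset.Iic c).image g).card :=
      le_trans (Submodule.finrank_mono hle) (finrank_span_finset_le_card _)
    have h2 : ((Finset.Iic c).image g).card ≤ (Finset.Iic c).card := Finset.card_image_le
    rw [Nat.card_Iic] at h2
    omega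
  -- W is antitone in c, so orthogonal complements increase
  have hWmono : ∀ c : ℕ, (Wc (c + 1))ᗮ ≤ (Wc (c + 2))ᗮ := by
    intro c
    apply Submodule.orthogonal_le
    simp only [hWc]
    apply span_mono
    apply Set.image_mono
    intro k hk
    simp only [Set.mem_setOf_eq] at hk ⊢
    omega
  -- V decomposition
  have hVsup : ∀ c : ℕ, Vc (c + 1) = Vc c ⊔ span ℂ {g (c + 1)} := by
    intro c
    have h1 : Set.Iic (c + 1) = Set.Iic c ∪ {c + 1} := by
      ext k; simp [Set.mem_Iic]; omega
    simp only [hVc]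
    rw [h1, Set.image_union, span_union, Set.image_singleton]
  -- flag construction
  have flag : ∀ c : ℕ, c < d → ∃ F : ℕ → Submodule ℂ (EuclideanSpace ℂ (Fin d)),
      (∀ c' ≤ c, finrank ℂ (F c') = c' + 1 ∧ Vc c' ≤ F c' ∧ F c' ≤ (Wc (c' + 1))ᗮ) ∧
      (∀ c' < c, F c' ≤ F (c' + 1)) := by
    intro c
    induction c with
    | zero =>
      intro hd0
      have hq : 1 ≤ finrank ℂ ((Wc 1)ᗮ) := hWorth 1 (by omega)
      have hp : finrank ℂ (Vc 0) ≤ 1 := hVrank 0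
      have hpq : Vc 0 ≤ (Wc 1)ᗮ := hVW 0 hd0
      obtain ⟨r, hr1, hr2, hr3⟩ := exists_between_finrank' (Vc 0) 1 hpq hp hq
      refine ⟨fun _ => r, ?_, by omega⟩
      intro c' hc'
      interval_cases c'
      exact ⟨hr3, hr1, hr2⟩
    | succ c ih =>
      intro hcd
      obtain ⟨F, hF1, hF2⟩ := ih (by omega)
      obtain ⟨hrk, hV, hW⟩ := hF1 c le_rfl
      have hple : F c ⊔ Vc (c + 1) ≤ (Wc (c + 2))ᗮ :=
        sup_le (le_trans hW (hWmono c)) (hVW (c + 1) hcd)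
      have hprk : finrank ℂ ↥(F c ⊔ Vc (c + 1)) ≤ c + 2 := by
        have heq : F c ⊔ Vc (c + 1) = F c ⊔ span ℂ {g (c + 1)} := by
          rw [hVsup c, ← sup_assoc, sup_eq_left.2 hV]
        rw [heq]
        by_cases hmem : g (c + 1) ∈ F c
        · rw [sup_eq_left.2 ((span_singleton_le_iff_mem _ _).2 hmem)]; omega
        · rw [finrank_sup_span_singleton' hmem]; omega
      have hq2 : c + 2 ≤ finrank ℂ ((Wc (c + 2))ᗮ) := hWorth (c + 2) (by omega)
      obtain ⟨r, hr1, hr2, hrrank⟩ := exists_between_finrank' (F c ⊔ Vc (c + 1)) (c + 2) hple hprk hq2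
      refine ⟨fun x => if x ≤ c then F x else r, ?_, ?_⟩
      · intro c' hc'
        beta_reduce
        by_cases h : c' ≤ c
        · have e1 : (if c' ≤ c then F c' else r) = F c' := if_pos h
          rw [e1]
          exact hF1 c' h
        · have hc'' : c' = c + 1 := by omega
          subst hc''
          have e1 : (if c + 1 ≤ c then F (c + 1) else r) = r := if_neg (by omega)
          rw [e1]
          exact ⟨hrrank, le_trans le_sup_right hr1, hr2⟩
      · intro c' hc'
        beta_reduce
        by_cases h : c' < c
        · have e1 : (if c' ≤ c then F c' else r) = F c' := if_pos (by omega)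
          have e2 : (if c' + 1 ≤ c then F (c' + 1) else r) = F (c' + 1) := if_pos (by omega)
          rw [e1, e2]
          exact hF2 c' h
        · have hc'' : c' = c := by omega
          subst hc''
          have e1 : (if c' ≤ c' then F c' else r) = F c' := if_pos le_rfl
          have e2 : (if c' + 1 ≤ c' then F (c' + 1) else r) = r := if_neg (by omega)
          rw [e1, e2]
          exact le_trans le_sup_left hr1
  -- obtain the flag up to d-1
  obtain ⟨F, hF1, hF2⟩ := flag (d - 1) (by omega)
  have hFprop : ∀ c : ℕ, c < d →
      finrank ℂ (F c) = c + 1 ∧ Vc c ≤ F c ∧ F c ≤ (Wc (c + 1))ᗮ := by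
    intro c hc; exact hF1 c (by omega)
  have hFmono : ∀ a b : ℕ, a ≤ b → b < d → F a ≤ F b := by
    intro a b hab hbd
    induction b with
    | zero =>
      have ha : a = 0 := by omega
      rw [ha]
    | succ b ih =>
      rcases Nat.lt_or_ge a (b + 1) with h | h
      · exact le_trans (ih (by omega) (by omega)) (hF2 b (by omega))
      · have : a = b + 1 := by omega
        subst this; exact le_rfl
  -- choose the adapted basis
  have hu : ∀ i : Fin d, ∃ x : EuclideanSpace ℂ (Fin d),
      x ∈ F (i : ℕ) ∧ ((i : ℕ) = 0 → x ≠ 0) ∧ (0 < (i : ℕ) → x ∉ F ((i : ℕ) - 1)) := by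
    intro i
    by_cases h0 : (i : ℕ) = 0
    · obtain ⟨hrk, _, _⟩ := hFprop (i : ℕ) i.isLt
      obtain ⟨x, hx1, hx2⟩ := exists_not_mem_of_finrank_lt (p := ⊥) bot_le
        (by rw [hrk, finrank_bot]; omega)
      refine ⟨x, hx1, fun _ => ?_, fun h => absurd h (by omega)⟩
      intro hx0; exact hx2 (by simp [hx0])
    · obtain ⟨hrk, _, _⟩ := hFprop (i : ℕ) i.isLt
      obtain ⟨hrk', _, _⟩ := hFprop ((i : ℕ) - 1) (by omega)
      obtain ⟨x, hx1, hx2⟩ := exists_not_mem_of_finrank_lt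
        (hFmono ((i : ℕ) - 1) (i : ℕ) (by omega) i.isLt) (by rw [hrk, hrk']; omega)
      exact ⟨x, hx1, fun h => absurd h h0, fun _ => hx2⟩
  choose u hu1 hu2 hu3 using hu
  -- spans of initial segments of u
  have hspan : ∀ c : ℕ, c < d → span ℂ (u '' {j : Fin d | (j : ℕ) ≤ c}) = F c := by
    intro c
    induction c with
    | zero =>
      intro h0d
      have hset : {j : Fin d | (j : ℕ) ≤ 0} = {(⟨0, h0d⟩ : Fin d)} := by
        ext j
        simp only [Set.mem_setOf_eq, Set.mem_singleton_iff, Fin.ext_iff]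
        omega
      rw [hset, Set.image_singleton]
      obtain ⟨hrk, _, _⟩ := hFprop 0 h0d
      apply Submodule.eq_of_le_of_finrank_eq
      · rw [span_singleton_le_iff_mem]
        exact hu1 ⟨0, h0d⟩
      · rw [hrk, finrank_span_singleton (hu2 ⟨0, h0d⟩ rfl)]
    | succ c ih =>
      intro hcd
      set jc : Fin d := ⟨c + 1, hcd⟩ with hjc
      have hset : {j : Fin d | (j : ℕ) ≤ c + 1} = {j : Fin d | (j : ℕ) ≤ c} ∪ {jc} := by
        ext j
        simp only [Set.mem_setOf_eq, Set.mem_union, Set.mem_singleton_iff, Fin.ext_iff, hjc]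
        omega
      rw [hset, Set.image_union, span_union, Set.image_singleton, ih (by omega)]
      have hnotmem : u jc ∉ F c := by
        have := hu3 jc (by simp [hjc])
        simpa [hjc] using this
      obtain ⟨hrk1, _, _⟩ := hFprop c (by omega)
      obtain ⟨hrk2, _, _⟩ := hFprop (c + 1) hcd
      apply Submodule.eq_of_le_of_finrank_eq
      · apply sup_le (hFmono c (c + 1) (by omega) hcd)
        rw [span_singleton_le_iff_mem]
        have := hu1 jc
        simpa [hjc] using this
      · rw [finrank_sup_span_singleton' hnotmem, hrk1, hrk2]
  -- u is linearly independent
  have hrange : Set.range u = u '' {j : Fin d | (j : ℕ) ≤ d - 1} := by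
    ext x
    simp only [Set.mem_range, Set.mem_image, Set.mem_setOf_eq]
    constructor
    · rintro ⟨j, rfl⟩; exact ⟨j, by have := j.isLt; omega, rfl⟩
    · rintro ⟨j, _, rfl⟩; exact ⟨j, rfl⟩
  have hLI : LinearIndependent ℂ u := by
    rw [linearIndependent_iff_card_eq_finrank_span]
    rw [Set.finrank, hrange, hspan (d - 1) (by omega)]
    obtain ⟨hrk, _, _⟩ := hFprop (d - 1) (by omega)
    rw [hrk]
    simp
    omega
  -- Gram-Schmidt orthonormalization
  haveI : WellFoundedLT (Fin d) := inferInstance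
  set e : Fin d → EuclideanSpace ℂ (Fin d) :=
    @InnerProductSpace.gramSchmidtNormed ℂ (EuclideanSpace ℂ (Fin d)) _ _ _ (Fin d) _ _
      (inferInstance : WellFoundedLT (Fin d)) u with he
  have hone : Orthonormal ℂ e := InnerProductSpace.gramSchmidtNormed_orthonormal hLI
  have hespan : ∀ i : Fin d, span ℂ (e '' Set.Iic i) = F (i : ℕ) := by
    intro i
    rw [he, InnerProductSpace.span_gramSchmidtNormed, InnerProductSpace.span_gramSchmidt_Iic]
    have hIic : Set.Iic i = {j : Fin d | (j : ℕ) ≤ (i : ℕ)} := by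
      ext j; exact Iff.rfl
    rw [hIic]
    exact hspan (i : ℕ) i.isLt
  -- key orthogonality properties
  have P1 : ∀ (x : Fin d) (k : ℕ), k < (x : ℕ) → (inner ℂ (e x) (g k) : ℂ) = 0 := by
    intro x k hk
    have hx1 : 0 < (x : ℕ) := by omega
    set x' : Fin d := ⟨(x : ℕ) - 1, by omega⟩ with hx'
    have hgk : g k ∈ span ℂ (e '' Set.Iic x') := by
      rw [hespan x']
      obtain ⟨_, hV, _⟩ := hFprop ((x : ℕ) - 1) (by omega)
      apply hV
      apply subset_span
      exact Set.mem_image_of_mem g (by simp [Set.mem_Iic]; omega)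
    refine inner_span_zero_right ?_ (g k) hgk
    intro j hj
    apply hone.2
    intro hxj
    rw [← hxj] at hj
    have hle := Set.mem_Iic.mp hj
    rw [Fin.le_def] at hle
    simp only [hx'] at hle
    omega
  have P2 : ∀ (x : Fin d) (k : ℕ), m + (x : ℕ) < k → (inner ℂ (e x) (g k) : ℂ) = 0 := by
    intro x k hk
    have hex : e x ∈ (Wc ((x : ℕ) + 1))ᗮ := by
      obtain ⟨_, _, hW⟩ := hFprop (x : ℕ) x.isLt
      apply hW
      rw [← hespan x]
      exact subset_span (Set.mem_image_of_mem e (Set.mem_Iic.2 le_rfl))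
    have hgk : g k ∈ Wc ((x : ℕ) + 1) := by
      simp only [hWc]
      exact subset_span (Set.mem_image_of_mem g (by simp only [Set.mem_setOf_eq]; omega))
    exact inner_left_of_mem_orthogonal hgk hex
  -- the matrix B
  refine ⟨Matrix.of fun i x => (starRingEnd ℂ) (e i x), ?_, ?_⟩
  · ext i j
    rw [Matrix.mul_apply, Matrix.one_apply]
    have horth := orthonormal_iff_ite.mp hone i j
    rw [PiLp.inner_apply] at horth
    simp only [RCLike.inner_apply] at horth
    rw [← horth]
    apply Finset.sum_congr rfl
    intro x _
    simp [Matrix.conjTranspose_apply, mul_comm]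
  · intro x k hcase
    have : (Matrix.of fun i x => (starRingEnd ℂ) (e i x)).mulVec (γ k) x
        = (inner ℂ (e x) (g k) : ℂ) := by
      rw [PiLp.inner_apply]
      simp only [RCLike.inner_apply]
      simp [Matrix.mulVec, dotProduct, hg, mul_comm]
    rw [this]
    rcases hcase with h | h
    · exact P1 x k h
    · exact P2 x k h



theorem exponential_reduction (b d n : ℕ) (hd : d = 2 ^ b) (hn : d - 1 ≤ n)
    (γ : ℕ → Fin d → ℂ) (hγdeg : ∀ k : ℕ, n < k → γ k = 0)
    (hstate : ∀ z : ℂ, ‖z‖ = 1 → ∑ i : Fin d, ‖polyVal n γ z i‖ ^ 2 = 1) :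
    (∃ A ∈ Matrix.unitaryGroup (Fin d) ℂ, ∃ γ' : ℕ → Fin d → ℂ,
        (∀ k : ℕ, n - (d - 1) < k → γ' k = 0) ∧
        (∀ z : ℂ, ‖z‖ = 1 →
          ∑ i : Fin d, ‖polyVal n γ' z i‖ ^ 2 = 1) ∧
        (∀ z : ℂ, ‖z‖ = 1 →
          ((A * Matrix.diagonal (fun i : Fin d => z ^ (i : ℕ)))ᴴ).mulVec (polyVal n γ z) =
            polyVal n γ' z)) ↔
      (∀ i j : Fin d, i < j → ((coeffMatrix γ 0)ᴴ * coeffMatrix γ (n - (d - 1))) i j = 0) := by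
  have hd1 : 1 ≤ d := by rw [hd]; exact Nat.one_le_two_pow
  constructor
  · -- forward direction
    rintro ⟨A, hA, γ', hdeg', hstate', hfun⟩ i j hij
    have hP : ∀ (x : Fin d) (k : ℕ), (k < (x : ℕ) ∨ (n - (d - 1)) + (x : ℕ) < k) →
        Aᴴ.mulVec (γ k) x = 0 := by
      intro x
      have hID : ∀ z : ℂ, ‖z‖ = 1 →
          ∑ k ∈ Finset.range (n + 1), Aᴴ.mulVec (γ k) x * z ^ k
            = ∑ k ∈ Finset.range (n + 1), γ' k x * z ^ (k + (x : ℕ)) := by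
        intro z hz
        have heq := congrFun (hfun z hz) x
        rw [LHS_eval] at heq
        have hz1 : (starRingEnd ℂ) z * z = 1 := conj_mul_self_one hz
        have hzi : z ^ (x : ℕ) * (starRingEnd ℂ z) ^ (x : ℕ) = 1 := by
          rw [← mul_pow, mul_comm z, hz1, one_pow]
        have h2 := congrArg (fun w => z ^ (x : ℕ) * w) heq
        rw [← mul_assoc, hzi, one_mul] at h2
        rw [h2]
        show z ^ (x : ℕ) * ∑ k ∈ Finset.range (n + 1), γ' k x * z ^ k = _
        rw [Finset.mul_sum]
        apply Finset.sum_congr rfl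
        intro k _
        rw [pow_add]
        ring
      have hvan := coeff_vanish n (n - (d - 1)) (x : ℕ) (fun k => Aᴴ.mulVec (γ k) x)
        (fun k => γ' k x) (fun k hk => by show γ' k x = 0; rw [hdeg' k hk]; rfl) hID
      intro k hcase
      by_cases hkn : k ≤ n
      · exact hvan k hkn hcase
      · have h0 : γ k = 0 := hγdeg k (by omega)
        rw [h0, Matrix.mulVec_zero]
        rfl
    have hAA : A * Aᴴ = 1 := by
      have := Matrix.mem_unitaryGroup_iff.mp hA
      rwa [Matrix.star_eq_conjTranspose] at this
    have hfact : (coeffMatrix γ 0)ᴴ * coeffMatrix γ (n - (d - 1))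
        = (Aᴴ * coeffMatrix γ 0)ᴴ * (Aᴴ * coeffMatrix γ (n - (d - 1))) := by
      rw [conjTranspose_mul, conjTranspose_conjTranspose, Matrix.mul_assoc,
        ← Matrix.mul_assoc A, hAA, Matrix.one_mul]
    rw [hfact, Matrix.mul_apply]
    apply Finset.sum_eq_zero
    intro x _
    have hcol : ∀ (jj : Fin d) (l : ℕ), (Aᴴ * coeffMatrix γ l) x jj
        = Aᴴ.mulVec (γ (l + (jj : ℕ))) x := by
      intro jj l
      rw [Matrix.mul_apply]
      simp [Matrix.mulVec, dotProduct, coeffMatrix]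
    rw [conjTranspose_apply, hcol i 0, hcol j (n - (d - 1))]
    rcases le_or_gt (j : ℕ) (x : ℕ) with hxj | hxj
    · have hfst : Aᴴ.mulVec (γ (0 + (i : ℕ))) x = 0 := by
        apply hP x (0 + (i : ℕ))
        left
        have : (i : ℕ) < (j : ℕ) := hij
        omega
      rw [hfst, star_zero, zero_mul]
    · have hsnd : Aᴴ.mulVec (γ ((n - (d - 1)) + (j : ℕ))) x = 0 := by
        apply hP x _
        right
        omega
      rw [hsnd, mul_zero]
  · -- backward direction
    intro htri
    have hm : (n - (d - 1)) + (d - 1) = n := by omega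
    have hog : ∀ k j : ℕ, k < d → k < j →
        (inner ℂ (toEuc (γ k)) (toEuc (γ ((n - (d - 1)) + j))) : ℂ) = 0 := by
      intro k j hkd hkj
      by_cases hjd : j < d
      · have h := htri ⟨k, hkd⟩ ⟨j, hjd⟩ (Fin.mk_lt_mk.mpr hkj)
        rw [Matrix.mul_apply] at h
        rw [PiLp.inner_apply]
        simp only [RCLike.inner_apply, toEuc_apply]
        rw [← h]
        apply Finset.sum_congr rfl
        intro x _
        rw [conjTranspose_apply]
        simp [coeffMatrix, mul_comm]
      · have h0 : γ ((n - (d - 1)) + j) = 0 := hγdeg _ (by omega)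
        rw [h0, toEuc_zero, inner_zero_right]
    obtain ⟨B, hB1, hKey⟩ := backward_construction hd1 hm γ hγdeg hog
    have hB1' : Bᴴ * B = 1 := mul_eq_one_comm.mp hB1
    have hzkey : ∀ z : ℂ, ‖z‖ = 1 →
        ((Bᴴ * Matrix.diagonal (fun i : Fin d => z ^ (i : ℕ)))ᴴ).mulVec (polyVal n γ z)
          = polyVal n (fun k i => B.mulVec (γ (k + (i : ℕ))) i) z := by
      intro z hz
      funext i
      rw [LHS_eval]
      simp only [conjTranspose_conjTranspose]
      have hz1 : (starRingEnd ℂ) z * z = 1 := conj_mul_self_one hz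
      have hzi : (starRingEnd ℂ z) ^ (i : ℕ) * z ^ (i : ℕ) = 1 := by
        rw [← mul_pow, hz1, one_pow]
      have e1 : ∑ k ∈ Finset.range (n + 1), B.mulVec (γ k) i * z ^ k
          = ∑ k ∈ Finset.Icc (i : ℕ) ((n - (d - 1)) + (i : ℕ)), B.mulVec (γ k) i * z ^ k := by
        symm
        apply Finset.sum_subset
        · intro k hk
          rw [Finset.mem_Icc] at hk
          rw [Finset.mem_range]
          have := i.isLt
          omega
        · intro k _ hk2
          rw [Finset.mem_Icc] at hk2
          push_neg at hk2
          have hc : k < (i : ℕ) ∨ (n - (d - 1)) + (i : ℕ) < k := by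
            by_cases h : (i : ℕ) ≤ k
            · right; exact hk2 h
            · left; omega
          rw [hKey i k hc, zero_mul]
      have e2 : Finset.Icc (i : ℕ) ((n - (d - 1)) + (i : ℕ))
          = Finset.map (addLeftEmbedding (i : ℕ)) (Finset.Icc 0 (n - (d - 1))) := by
        rw [Finset.map_add_left_Icc, add_zero, add_comm (i : ℕ) (n - (d - 1))]
      have e3 : polyVal n (fun k i => B.mulVec (γ (k + (i : ℕ))) i) z i
          = ∑ k ∈ Finset.Icc 0 (n - (d - 1)), B.mulVec (γ (k + (i : ℕ))) i * z ^ k := by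
        show ∑ k ∈ Finset.range (n + 1), B.mulVec (γ (k + (i : ℕ))) i * z ^ k = _
        symm
        apply Finset.sum_subset
        · intro k hk
          rw [Finset.mem_Icc] at hk
          rw [Finset.mem_range]
          omega
        · intro k _ hk2
          rw [Finset.mem_Icc] at hk2
          have hc : (k + (i : ℕ)) < (i : ℕ) ∨ (n - (d - 1)) + (i : ℕ) < k + (i : ℕ) := by
            right; omega
          rw [hKey i (k + (i : ℕ)) hc, zero_mul]
      rw [e1, e2, Finset.sum_map, e3, Finset.mul_sum]
      apply Finset.sum_congr rfl
      intro k _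
      simp only [addLeftEmbedding_apply]
      rw [show (i : ℕ) + k = k + (i : ℕ) from add_comm _ _]
      calc (starRingEnd ℂ z) ^ (i : ℕ) * (B.mulVec (γ (k + (i : ℕ))) i * z ^ (k + (i : ℕ)))
          = ((starRingEnd ℂ z) ^ (i : ℕ) * z ^ (i : ℕ)) *
            (B.mulVec (γ (k + (i : ℕ))) i * z ^ k) := by rw [pow_add]; ring
        _ = B.mulVec (γ (k + (i : ℕ))) i * z ^ k := by rw [hzi, one_mul]
    refine ⟨Bᴴ, ?_, fun k i => B.mulVec (γ (k + (i : ℕ))) i, ?_, ?_, hzkey⟩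
    · rw [Matrix.mem_unitaryGroup_iff, Matrix.star_eq_conjTranspose,
        conjTranspose_conjTranspose]
      exact hB1'
    · intro k hk
      funext i
      exact hKey i (k + (i : ℕ)) (Or.inr (by omega))
    · intro z hz
      rw [← hzkey z hz]
      have hz1 : (starRingEnd ℂ) z * z = 1 := conj_mul_self_one hz
      have hD : Matrix.diagonal (fun i : Fin d => z ^ (i : ℕ)) *
          (Matrix.diagonal (fun i : Fin d => z ^ (i : ℕ)))ᴴ = 1 := by
        rw [diagonal_conjTranspose, diagonal_mul_diagonal]
        have : (fun i : Fin d => z ^ (i : ℕ) * star (fun i : Fin d => z ^ (i : ℕ)) i)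
            = fun _ => 1 := by
          funext i
          simp only [Pi.star_apply, star_pow]
          rw [← mul_pow]
          rw [show (star z : ℂ) = (starRingEnd ℂ) z from rfl, mul_comm z, hz1, one_pow]
        rw [this, diagonal_one]
      have hM : ((Bᴴ * Matrix.diagonal (fun i : Fin d => z ^ (i : ℕ)))ᴴ)ᴴ *
          ((Bᴴ * Matrix.diagonal (fun i : Fin d => z ^ (i : ℕ)))ᴴ) = 1 := by
        rw [conjTranspose_conjTranspose, conjTranspose_mul, conjTranspose_conjTranspose,
          Matrix.mul_assoc, ← Matrix.mul_assoc (Matrix.diagonal _), hD, Matrix.one_mul]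
        exact hB1'
      rw [sum_abs_sq_mulVec hM (polyVal n γ z)]
      exact hstate z hz
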